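/- (q-Vandermonde) For all m, u, n ≥ 0: ∑_{κ} [m choose κ]_q [u choose n-κ]_q q^{(m-κ)(n-κ)} = [m+u choose n]_q. -/
import Mathlib


/-- The `q`-analog `[n]_q = 1 + q + ⋯ + q^(n-1)` of a natural number. -/
def qNum {R : Type*} [CommRing R] (q : R) (n : ℕ) : R := ∑ i ∈ Finset.range n, q ^ i

/-- The `q`-factorial `[n]! = [1][2]⋯[n]`. -/
def qFact {R : Type*} [CommRing R] (q : R) (n : ℕ) : R := ∏ i ∈ Finset.range n, qNum q (i + 1)

/-- The Gaussian (`q`-)binomial coefficient, via the `q`-Pascal recursion. -/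
def qBinom {R : Type*} [CommRing R] (q : R) : ℕ → ℕ → R
  | _, 0 => 1
  | 0, _ + 1 => 0
  | n + 1, k + 1 => qBinom q n k + q ^ (k + 1) * qBinom q n (k + 1)

/-- The `q`-shifted product `(1 −· p)^m = ∏_{i=0}^{m-1} (1 - p q^i)`. -/
def qProdSub {R : Type*} [CommRing R] (q p : R) (m : ℕ) : R :=
  ∏ i ∈ Finset.range m, (1 - p * q ^ i)

/-- The `q`-shifted power `(x +· y)^m = ∏_{i=0}^{m-1} (x + q^i y)`. -/
def qProdAdd {R : Type*} [CommRing R] (q x y : R) (m : ℕ) : R :=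
  ∏ i ∈ Finset.range m, (x + q ^ i * y)

lemma qBinom_zero_right {R : Type*} [CommRing R] (q : R) (n : ℕ) : qBinom q n 0 = 1 := by
  cases n <;> rfl

lemma qBinom_succ {R : Type*} [CommRing R] (q : R) (n k : ℕ) :
    qBinom q (n + 1) (k + 1) = qBinom q n k + q ^ (k + 1) * qBinom q n (k + 1) := rfl

lemma qBinom_eq_zero {R : Type*} [CommRing R] (q : R) :
    ∀ {n k : ℕ}, n < k → qBinom q n k = 0 := by
  intro n
  induction n with
  | zero =>
    intro k h
    match k with
    | 0 => omega
    | k + 1 => rfl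
  | succ n ih =>
    intro k h
    match k with
    | 0 => omega
    | k + 1 =>
      rw [qBinom_succ, ih (by omega), ih (by omega)]
      ring

/-- q-Vandermonde identity (5.3):
`∑_κ [m choose κ] [u choose n-κ] q^{(m-κ)(n-κ)} = [m+u choose n]`. -/
theorem qVandermonde {R : Type*} [CommRing R] (q : R) (m u n : ℕ) :
    ∑ κ ∈ Finset.range (n + 1),
        qBinom q m κ * qBinom q u (n - κ) * q ^ ((m - κ) * (n - κ)) =
      qBinom q (m + u) n := by
  induction m generalizing n with
  | zero =>
    rw [Finset.sum_eq_single 0]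
    · simp [qBinom_zero_right]
    · intro b hb hb0
      rw [qBinom_eq_zero q (Nat.pos_of_ne_zero hb0)]
      ring
    · intro h
      simp at h
  | succ m ih =>
    cases n with
    | zero => simp [qBinom_zero_right]
    | succ n =>
      rw [Finset.sum_range_succ']
      have expand : ∀ i ∈ Finset.range (n + 1),
          qBinom q (m + 1) (i + 1) * qBinom q u (n + 1 - (i + 1)) *
              q ^ ((m + 1 - (i + 1)) * (n + 1 - (i + 1)))
            = qBinom q m i * qBinom q u (n - i) * q ^ ((m - i) * (n - i))
              + q ^ (i + 1) * qBinom q m (i + 1) * qBinom q u (n - i) *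
                  q ^ ((m - i) * (n - i)) := by
        intro i _
        rw [qBinom_succ]
        simp only [Nat.succ_sub_succ]
        ring
      rw [Finset.sum_congr rfl expand, Finset.sum_add_distrib, ih n]
      have key : (∑ i ∈ Finset.range (n + 1),
            q ^ (i + 1) * qBinom q m (i + 1) * qBinom q u (n - i) *
              q ^ ((m - i) * (n - i)))
            + qBinom q (m + 1) 0 * qBinom q u (n + 1 - 0) *
                q ^ ((m + 1 - 0) * (n + 1 - 0))
          = q ^ (n + 1) * qBinom q (m + u) (n + 1) := by
        conv_rhs => rw [← ih (n + 1), Finset.sum_range_succ', mul_add, Finset.mul_sum]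
        congr 1
        · refine Finset.sum_congr rfl ?_
          intro i hi
          simp only [Finset.mem_range] at hi
          simp only [Nat.succ_sub_succ]
          rcases le_or_gt (i + 1) m with h | h
          · have h1 : m - i = m - (i + 1) + 1 := by omega
            have h2 : (m - i) * (n - i) = (m - (i + 1)) * (n - i) + (n - i) := by
              rw [h1, add_mul, one_mul]
            have h3 : n + 1 = (i + 1) + (n - i) := by omega
            rw [h2, h3, pow_add, pow_add]
            ring
          · rw [qBinom_eq_zero q h]
            ring
        · simp only [Nat.sub_zero, qBinom_zero_right, Nat.zero_sub]
          have : (m + 1) * (n + 1) = m * (n + 1) + (n + 1) := by ring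
          rw [this, pow_add]
          ring
      rw [add_assoc, key]
      have : m + 1 + u = (m + u) + 1 := by omega
      rw [this, qBinom_succ]
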